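/- The Kaplan–Yorke dimension function is monotone in the sense: if λ_1 ≥ ... ≥ λ_n and μ_1 ≥ ... ≥ μ_n are ordered tuples with λ_i ≤ μ_i for all i, with λ_1 ≥ 0 and ∑μ_i < 0, then d^{KY}(λ) ≤ d^{KY}(μ). -/

import Mathlib

open Filter

/-- Partial sum of the first j entries of an ordered tuple. -/
noncomputable def pSum {n : ℕ} (l : Fin n → ℝ) (j : ℕ) : ℝ :=
  ∑ i ∈ Finset.univ.filter (fun i : Fin n => (i : ℕ) < j), l i

open Classical in
/-- Kaplan–Yorke dimension of an ordered tuple of Lyapunov exponents. -/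
noncomputable def dKY {n : ℕ} (l : Fin n → ℝ) : ℝ :=
  if hn : n = 0 then 0
  else if l ⟨0, Nat.pos_of_ne_zero hn⟩ < 0 then 0
  else if 0 ≤ pSum l n then n
  else
    (Nat.findGreatest (fun k => 0 ≤ pSum l k) (n - 1) : ℝ) +
      pSum l (Nat.findGreatest (fun k => 0 ≤ pSum l k) (n - 1)) /
        |l ⟨Nat.findGreatest (fun k => 0 ≤ pSum l k) (n - 1),
            Nat.lt_of_le_of_lt (Nat.findGreatest_le (n - 1))
              (Nat.sub_lt (Nat.pos_of_ne_zero hn) one_pos)⟩|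

lemma pSum_zero {n : ℕ} (l : Fin n → ℝ) : pSum l 0 = 0 := by
  simp [pSum]

lemma pSum_succ {n : ℕ} (l : Fin n → ℝ) {j : ℕ} (hj : j < n) :
    pSum l (j + 1) = pSum l j + l ⟨j, hj⟩ := by
  unfold pSum
  have hset : (Finset.univ.filter (fun i : Fin n => (i : ℕ) < j + 1)) =
      insert ⟨j, hj⟩ (Finset.univ.filter (fun i : Fin n => (i : ℕ) < j)) := by
    ext i
    simp [Nat.lt_succ_iff_lt_or_eq, Fin.ext_iff]
    constructor <;> intro h <;> omega
  rw [hset, Finset.sum_insert (by simp)]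
  ring

lemma pSum_univ {n : ℕ} (l : Fin n → ℝ) : pSum l n = ∑ i, l i := by
  unfold pSum
  congr 1
  apply Finset.filter_true_of_mem
  intro i _
  exact i.isLt

lemma pSum_le {n : ℕ} {l m : Fin n → ℝ} (h : ∀ i, l i ≤ m i) (j : ℕ) :
    pSum l j ≤ pSum m j :=
  Finset.sum_le_sum fun i _ => h i


lemma kyFrac_le {n : ℕ} (l m : Fin n → ℝ) (hle : ∀ i, l i ≤ m i)
    {j jm : ℕ} (hjn : j < n) (hjmn : jm < n) (hjle : j ≤ jm)
    (hPj : 0 ≤ pSum l j) (hQjm : 0 ≤ pSum m jm)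
    (hnextl : pSum l (j + 1) < 0) (hnextm : pSum m (jm + 1) < 0) :
    (j : ℝ) + pSum l j / |l ⟨j, hjn⟩| ≤ (jm : ℝ) + pSum m jm / |m ⟨jm, hjmn⟩| := by
  have hlj : l ⟨j, hjn⟩ < 0 := by
    have := pSum_succ l hjn
    nlinarith
  have hmjm : m ⟨jm, hjmn⟩ < 0 := by
    have := pSum_succ m hjmn
    nlinarith
  have hdm_lb : (jm : ℝ) ≤ jm + pSum m jm / |m ⟨jm, hjmn⟩| :=
    le_add_of_nonneg_right (div_nonneg hQjm (abs_nonneg _))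
  rcases eq_or_lt_of_le hjle with heq | hlt
  · subst heq
    have hlm : l ⟨j, hjn⟩ ≤ m ⟨j, hjn⟩ := hle _
    have hmm : m ⟨j, hjmn⟩ = m ⟨j, hjn⟩ := rfl
    have h1 : |m ⟨j, hjmn⟩| ≤ |l ⟨j, hjn⟩| := by
      rw [hmm, abs_of_neg hmjm, abs_of_neg hlj]; linarith
    have h2 : pSum l j / |l ⟨j, hjn⟩| ≤ pSum m j / |m ⟨j, hjmn⟩| :=
      div_le_div₀ hQjm (pSum_le hle j) (abs_pos.2 hmjm.ne) h1
    linarith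
  · have hfrac : pSum l j / |l ⟨j, hjn⟩| < 1 := by
      rw [div_lt_one (abs_pos.2 hlj.ne), abs_of_neg hlj]
      have := pSum_succ l hjn
      linarith
    have hstep : (j : ℝ) + pSum l j / |l ⟨j, hjn⟩| < jm := by
      have : (j : ℝ) + 1 ≤ jm := by exact_mod_cast Nat.succ_le_of_lt hlt
      linarith
    exact le_trans hstep.le hdm_lb

/-- Monotonicity of the Kaplan–Yorke dimension in the ordered exponents. -/
theorem kaplan_yorke_monotone {n : ℕ} (hn : 0 < n) (l m : Fin n → ℝ)
    (hordl : Antitone l) (hordm : Antitone m) (hle : ∀ i, l i ≤ m i)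
    (hl1 : 0 ≤ l ⟨0, hn⟩) (hmsum : ∑ i, m i < 0) :
    dKY l ≤ dKY m := by
  have hn0 : n ≠ 0 := hn.ne'
  have hm1 : 0 ≤ m ⟨0, hn⟩ := le_trans hl1 (hle _)
  have hsm : ¬ 0 ≤ pSum m n := by rw [pSum_univ]; exact not_le.2 hmsum
  have hsl : ¬ 0 ≤ pSum l n := by
    intro h; exact hsm (le_trans h (pSum_le hle n))
  rw [dKY, dKY, dif_neg hn0, dif_neg hn0, if_neg (not_lt.2 hl1), if_neg (not_lt.2 hm1),
    if_neg hsl, if_neg hsm]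
  set j := Nat.findGreatest (fun k => 0 ≤ pSum l k) (n - 1) with hjdef
  set jm := Nat.findGreatest (fun k => 0 ≤ pSum m k) (n - 1) with hjmdef
  have hjn : j < n := Nat.lt_of_le_of_lt (Nat.findGreatest_le _) (Nat.sub_lt hn one_pos)
  have hjmn : jm < n := Nat.lt_of_le_of_lt (Nat.findGreatest_le _) (Nat.sub_lt hn one_pos)
  have hPj : 0 ≤ pSum l j := by
    rcases Nat.eq_zero_or_pos j with h0 | h0
    · rw [h0, pSum_zero]
    · exact Nat.findGreatest_of_ne_zero hjdef.symm h0.ne'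
  have hQjm : 0 ≤ pSum m jm := by
    rcases Nat.eq_zero_or_pos jm with h0 | h0
    · rw [h0, pSum_zero]
    · exact Nat.findGreatest_of_ne_zero hjmdef.symm h0.ne'
  have hjle : j ≤ jm := Nat.findGreatest_mono_left (fun k hk => le_trans hk (pSum_le hle k)) _
  have hnextl : pSum l (j + 1) < 0 := by
    rcases eq_or_lt_of_le (Nat.succ_le_of_lt hjn) with h | h
    · rw [show j + 1 = n by omega]; exact not_le.1 hsl
    · have : ¬ (0 ≤ pSum l (j + 1)) :=
        Nat.findGreatest_is_greatest (P := fun k => 0 ≤ pSum l k) (n := n - 1)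
          (by rw [← hjdef]; omega) (by omega)
      exact not_le.1 this
  have hnextm : pSum m (jm + 1) < 0 := by
    rcases eq_or_lt_of_le (Nat.succ_le_of_lt hjmn) with h | h
    · rw [show jm + 1 = n by omega]; exact not_le.1 hsm
    · have : ¬ (0 ≤ pSum m (jm + 1)) :=
        Nat.findGreatest_is_greatest (P := fun k => 0 ≤ pSum m k) (n := n - 1)
          (by rw [← hjmdef]; omega) (by omega)
      exact not_le.1 this
  exact kyFrac_le l m hle hjn hjmn hjle hPj hQjm hnextl hnextm
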